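/- Let E ∈ ℝ^{d×d} be invertible and let G be the linear map of (ℂ^d)^N applying E to each of the N blocks (a real invertible Nd×Nd matrix). Let μ ∈ ℂ with μ ≠ 0 and u, v ∈ (ℂ^d)^N. Suppose q : [0,1] → (ℂ^d)^N is differentiable with G q'(s) = A(s, conj(μ)) q(s) for all s ∈ [0,1] and q(0) = u, and r : [0,1] → (ℂ^d)^N is differentiable with Gᵀ r'(s) = −A(s, μ)ᵀ r(s) for all s ∈ [0,1] and Gᵀ r(1) = v. Then (q(1) − B(conj(μ))u)* v = u* (Gᵀ r(0) − B(μ)ᵀ v); that is, the transposed characteristic matrix of the system with leading coefficient matrix E equals the conjugate transpose of the characteristic matrix at conj(μ). (Appendix B: extension of the duality identity of Theorem 4.1 to systems E x'(t) = Σ_{j=0}^h A_j(t) x(t − τ_j) with a nonsingular leading coefficient matrix.) -/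

import Mathlib

open scoped BigOperators

noncomputable section

/-- `aExp N k = ⌊(k-1)/N⌋` (floor division). -/
def aExp (N : ℕ) (k : ℤ) : ℤ := Int.fdiv (k - 1) (N : ℤ)

/-- `bIdx N hN k` is the `Fin N` index (zero-based) corresponding to the
paper index `b_k = ((k-1) mod N) + 1 ∈ {1,…,N}`. -/
def bIdx (N : ℕ) (hN : 0 < N) (k : ℤ) : Fin N :=
  ⟨((k - 1) % (N : ℤ)).toNat, by
    have hN' : (0:ℤ) < (N:ℤ) := by exact_mod_cast hN
    have h1 : 0 ≤ (k - 1) % (N : ℤ) := Int.emod_nonneg _ (ne_of_gt hN')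
    have h2 : (k - 1) % (N : ℤ) < (N : ℤ) := Int.emod_lt_of_pos _ hN'
    omega⟩

/-- The block linear map `A(s,μ)` acting on `(ℂ^d)^N`:
`(A(s,μ)q)_n = Δ Σ_j A_j((s+n-1)Δ) μ^{a_{n-n_j}} q_{b_{n-n_j}}` (paper indices `n = 1,…,N`). -/
def Aop (d h N : ℕ) (hN : 0 < N) (Δ : ℝ)
    (A : Fin (h+1) → ℝ → Matrix (Fin d) (Fin d) ℝ) (nn : Fin (h+1) → ℕ)
    (s : ℝ) (μ : ℂ) (q : Fin N → Fin d → ℂ) : Fin N → Fin d → ℂ :=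
  fun n i => (Δ : ℂ) * ∑ j : Fin (h+1),
    μ ^ aExp N (((n : ℕ) : ℤ) + 1 - (nn j : ℤ)) *
      ∑ i' : Fin d, ((A j ((s + ((n : ℕ) : ℝ)) * Δ)) i i' : ℂ) *
        q (bIdx N hN (((n : ℕ) : ℤ) + 1 - (nn j : ℤ))) i'

/-- The linear map `B(μ)` on `(ℂ^d)^N`:
`(B(μ)q)_n = q_{n+1}` for `n = 1,…,N-1` and `(B(μ)q)_N = μ q_1`. -/
def Bop (d N : ℕ) (hN : 0 < N) (μ : ℂ) (q : Fin N → Fin d → ℂ) : Fin N → Fin d → ℂ :=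
  fun n i => if hn : (n : ℕ) + 1 < N then q ⟨(n : ℕ) + 1, hn⟩ i else μ * q ⟨0, hN⟩ i

/-- The transpose (without conjugation) `A(s,μ)ᵀ` of the block map `A(s,μ)`,
acting on `p ∈ (ℂ^d)^N`. -/
def AopT (d h N : ℕ) (hN : 0 < N) (Δ : ℝ)
    (A : Fin (h+1) → ℝ → Matrix (Fin d) (Fin d) ℝ) (nn : Fin (h+1) → ℕ)
    (s : ℝ) (μ : ℂ) (p : Fin N → Fin d → ℂ) : Fin N → Fin d → ℂ :=
  fun n i => (Δ : ℂ) * ∑ m : Fin N, ∑ j : Fin (h+1),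
    if n = bIdx N hN (((m : ℕ) : ℤ) + 1 - (nn j : ℤ)) then
      μ ^ aExp N (((m : ℕ) : ℤ) + 1 - (nn j : ℤ)) *
        ∑ i' : Fin d, ((A j ((s + ((m : ℕ) : ℝ)) * Δ)) i' i : ℂ) * p m i'
    else 0

/-- The transpose `B(μ)ᵀ` of `B(μ)`:
`(B(μ)ᵀ v)_1 = μ v_N` and `(B(μ)ᵀ v)_n = v_{n-1}` for `n = 2,…,N`. -/
def BopT (d N : ℕ) (hN : 0 < N) (μ : ℂ) (v : Fin N → Fin d → ℂ) : Fin N → Fin d → ℂ :=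
  fun n i => if hn : 0 < (n : ℕ) then
      v ⟨(n : ℕ) - 1, by have := n.isLt; omega⟩ i
    else μ * v ⟨N - 1, by omega⟩ i

lemma sumCollapseAux {N h : ℕ} (c : Fin N → Fin (h+1) → Fin N)
    (f : Fin N → Fin N → Fin (h+1) → ℂ) :
    ∑ n : Fin N, ∑ m : Fin N, ∑ j : Fin (h+1), (if n = c m j then f n m j else 0)
      = ∑ m : Fin N, ∑ j : Fin (h+1), f (c m j) m j := by
  rw [Finset.sum_comm]
  refine Finset.sum_congr rfl fun m _ => ?_
  rw [Finset.sum_comm]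
  refine Finset.sum_congr rfl fun j _ => ?_
  simp [Finset.sum_ite_eq']

lemma adjA (d h N : ℕ) (hN : 0 < N) (Δ : ℝ)
    (A : Fin (h+1) → ℝ → Matrix (Fin d) (Fin d) ℝ) (nn : Fin (h+1) → ℕ)
    (s : ℝ) (μ : ℂ) (w z : Fin N → Fin d → ℂ) :
    ∑ n : Fin N, ∑ i : Fin d,
      (starRingEnd ℂ) (Aop d h N hN Δ A nn s (starRingEnd ℂ μ) w n i) * z n i
    = ∑ n : Fin N, ∑ i : Fin d,
      (starRingEnd ℂ) (w n i) * AopT d h N hN Δ A nn s μ z n i := by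
  have hR : (∑ n : Fin N, ∑ i : Fin d,
      (starRingEnd ℂ) (w n i) * AopT d h N hN Δ A nn s μ z n i)
      = ∑ m : Fin N, ∑ j : Fin (h+1),
          ∑ i : Fin d, ∑ i' : Fin d,
            (Δ : ℂ) * μ ^ aExp N (((m : ℕ) : ℤ) + 1 - (nn j : ℤ)) *
              ((A j ((s + ((m : ℕ) : ℝ)) * Δ)) i' i : ℂ) *
              (starRingEnd ℂ) (w (bIdx N hN (((m : ℕ) : ℤ) + 1 - (nn j : ℤ))) i) *
              z m i' := by
    have step1 : ∀ n : Fin N,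
        (∑ i : Fin d, (starRingEnd ℂ) (w n i) * AopT d h N hN Δ A nn s μ z n i)
        = ∑ m : Fin N, ∑ j : Fin (h+1),
            (if n = bIdx N hN (((m : ℕ) : ℤ) + 1 - (nn j : ℤ)) then
              ∑ i : Fin d, ∑ i' : Fin d,
                (Δ : ℂ) * μ ^ aExp N (((m : ℕ) : ℤ) + 1 - (nn j : ℤ)) *
                  ((A j ((s + ((m : ℕ) : ℝ)) * Δ)) i' i : ℂ) *
                  (starRingEnd ℂ) (w n i) * z m i'
            else 0) := by
      intro n
      simp only [AopT, Finset.mul_sum, Finset.sum_mul, mul_ite, mul_zero]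
      rw [Finset.sum_comm]
      refine Finset.sum_congr rfl fun m _ => ?_
      rw [Finset.sum_comm]
      refine Finset.sum_congr rfl fun j _ => ?_
      by_cases hc : n = bIdx N hN (((m : ℕ) : ℤ) + 1 - (nn j : ℤ))
      · simp only [hc]
        simp only [if_true]
        refine Finset.sum_congr rfl fun i _ => ?_
        refine Finset.sum_congr rfl fun i' _ => ?_
        ring
      · simp [hc]
    calc (∑ n : Fin N, ∑ i : Fin d,
        (starRingEnd ℂ) (w n i) * AopT d h N hN Δ A nn s μ z n i)
        = ∑ n : Fin N, ∑ m : Fin N, ∑ j : Fin (h+1),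
            (if n = bIdx N hN (((m : ℕ) : ℤ) + 1 - (nn j : ℤ)) then
              ∑ i : Fin d, ∑ i' : Fin d,
                (Δ : ℂ) * μ ^ aExp N (((m : ℕ) : ℤ) + 1 - (nn j : ℤ)) *
                  ((A j ((s + ((m : ℕ) : ℝ)) * Δ)) i' i : ℂ) *
                  (starRingEnd ℂ) (w n i) * z m i'
            else 0) := Finset.sum_congr rfl fun n _ => step1 n
      _ = _ := by
          rw [sumCollapseAux]
  rw [hR]
  refine Finset.sum_congr rfl fun n _ => ?_
  have hL : ∀ i : Fin d,
      (starRingEnd ℂ) (Aop d h N hN Δ A nn s (starRingEnd ℂ μ) w n i)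
      = (Δ : ℂ) * ∑ j : Fin (h+1),
          μ ^ aExp N (((n : ℕ) : ℤ) + 1 - (nn j : ℤ)) *
            ∑ i' : Fin d, ((A j ((s + ((n : ℕ) : ℝ)) * Δ)) i i' : ℂ) *
              (starRingEnd ℂ) (w (bIdx N hN (((n : ℕ) : ℤ) + 1 - (nn j : ℤ))) i') := by
    intro i
    simp [Aop, map_mul, map_sum, map_zpow₀, Complex.conj_conj, Complex.conj_ofReal]
  calc (∑ i : Fin d,
      (starRingEnd ℂ) (Aop d h N hN Δ A nn s (starRingEnd ℂ μ) w n i) * z n i)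
      = ∑ i : Fin d, ∑ j : Fin (h+1), ∑ i' : Fin d,
          (Δ : ℂ) * μ ^ aExp N (((n : ℕ) : ℤ) + 1 - (nn j : ℤ)) *
            ((A j ((s + ((n : ℕ) : ℝ)) * Δ)) i i' : ℂ) *
            (starRingEnd ℂ) (w (bIdx N hN (((n : ℕ) : ℤ) + 1 - (nn j : ℤ))) i') *
            z n i := by
        refine Finset.sum_congr rfl fun i _ => ?_
        rw [hL i]
        rw [Finset.mul_sum, Finset.sum_mul]
        refine Finset.sum_congr rfl fun j _ => ?_
        rw [Finset.mul_sum, Finset.mul_sum, Finset.sum_mul]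
        refine Finset.sum_congr rfl fun i' _ => ?_
        ring
    _ = _ := by
        rw [Finset.sum_comm]
        exact Finset.sum_congr rfl fun j _ => Finset.sum_comm


def cycEquiv (N : ℕ) (hN : 0 < N) : Equiv (Fin N) (Fin N) where
  toFun n := if h : (n : ℕ) + 1 < N then ⟨(n : ℕ) + 1, h⟩ else ⟨0, hN⟩
  invFun m := if h : 0 < (m : ℕ) then ⟨(m : ℕ) - 1, by have := m.isLt; omega⟩
    else ⟨N - 1, by omega⟩
  left_inv n := by
    dsimp only
    by_cases h : (n : ℕ) + 1 < N
    · rw [dif_pos h, dif_pos (show 0 < ((⟨(n : ℕ) + 1, h⟩ : Fin N) : ℕ) from Nat.succ_pos _)]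
      exact Fin.ext (by simp)
    · rw [dif_neg h]
      rw [dif_neg (show ¬ 0 < ((⟨0, hN⟩ : Fin N) : ℕ) by simp)]
      have := n.isLt
      exact Fin.ext (by simp; omega)
  right_inv m := by
    dsimp only
    by_cases h : 0 < (m : ℕ)
    · rw [dif_pos h]
      have hlt : ((⟨(m : ℕ) - 1, by have := m.isLt; omega⟩ : Fin N) : ℕ) + 1 < N := by
        have := m.isLt; simp; omega
      rw [dif_pos hlt]
      exact Fin.ext (by simp; omega)
    · rw [dif_neg h]
      have hnlt : ¬ ((⟨N - 1, by omega⟩ : Fin N) : ℕ) + 1 < N := by simp; omega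
      rw [dif_neg hnlt]
      have := m.isLt
      exact Fin.ext (by simp; omega)

lemma cycEquiv_pos {N : ℕ} {hN : 0 < N} {n : Fin N} (h : (n : ℕ) + 1 < N) :
    cycEquiv N hN n = ⟨(n : ℕ) + 1, h⟩ := dif_pos h

lemma cycEquiv_neg {N : ℕ} {hN : 0 < N} {n : Fin N} (h : ¬ (n : ℕ) + 1 < N) :
    cycEquiv N hN n = ⟨0, hN⟩ := dif_neg h

lemma adjB (d N : ℕ) (hN : 0 < N) (μ : ℂ) (u v : Fin N → Fin d → ℂ) :
    ∑ n : Fin N, ∑ i : Fin d,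
      (starRingEnd ℂ) (Bop d N hN (starRingEnd ℂ μ) u n i) * v n i
    = ∑ n : Fin N, ∑ i : Fin d, (starRingEnd ℂ) (u n i) * BopT d N hN μ v n i := by
  refine Fintype.sum_equiv (cycEquiv N hN)
    (fun n => ∑ i : Fin d, (starRingEnd ℂ) (Bop d N hN (starRingEnd ℂ μ) u n i) * v n i)
    (fun m => ∑ i : Fin d, (starRingEnd ℂ) (u m i) * BopT d N hN μ v m i) (fun n => ?_)
  by_cases hc : (n : ℕ) + 1 < N
  · rw [cycEquiv_pos hc]
    refine Finset.sum_congr rfl fun i _ => ?_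
    simp only [Bop, BopT]
    rw [dif_pos hc,
      dif_pos (show 0 < ((⟨(n : ℕ) + 1, hc⟩ : Fin N) : ℕ) from Nat.succ_pos _)]
    have hidx : (⟨((⟨(n : ℕ) + 1, hc⟩ : Fin N) : ℕ) - 1,
        by have := (⟨(n : ℕ) + 1, hc⟩ : Fin N).isLt; omega⟩ : Fin N) = n :=
      Fin.ext (by simp)
    rw [hidx]
  · rw [cycEquiv_neg hc]
    refine Finset.sum_congr rfl fun i _ => ?_
    simp only [Bop, BopT]
    rw [dif_neg hc, dif_neg (show ¬ 0 < ((⟨0, hN⟩ : Fin N) : ℕ) by simp)]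
    have hn : n = (⟨N - 1, by omega⟩ : Fin N) := Fin.ext (by have := n.isLt; simp; omega)
    rw [← hn, map_mul, Complex.conj_conj]
    ring

/-- **Appendix B.** Duality identity for systems `E x'(t) = Σ_j A_j(t) x(t-τ_j)` with a
nonsingular leading coefficient matrix `E`. With `G` the block-diagonal map applying `E`
to each of the `N` blocks: if `G q'(s) = A(s, conj μ) q(s)`, `q(0) = u`, and
`Gᵀ r'(s) = -A(s,μ)ᵀ r(s)`, `Gᵀ r(1) = v`, then
`(q(1) - B(conj μ)u)* v = u* (Gᵀ r(0) - B(μ)ᵀ v)`; that is, the transposed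
characteristic matrix equals the conjugate transpose of the characteristic matrix at
`conj μ`. -/
theorem mass_matrix_duality
    (d h N : ℕ) (hd : 0 < d) (hN : 0 < N) (Δ : ℝ) (hΔ : 0 < Δ)
    (A : Fin (h+1) → ℝ → Matrix (Fin d) (Fin d) ℝ)
    (hA : ∀ j, Continuous (A j))
    (hper : ∀ j t, A j (t + (N : ℝ) * Δ) = A j t)
    (nn : Fin (h+1) → ℕ) (hn0 : nn 0 = 0)
    (hmono : ∀ i j : Fin (h+1), 1 ≤ (i : ℕ) → i < j → nn i < nn j)
    (E : Matrix (Fin d) (Fin d) ℝ) (hE : Invertible E)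
    (μ : ℂ) (hμ : μ ≠ 0)
    (u v : Fin N → Fin d → ℂ)
    (q qd : ℝ → Fin N → Fin d → ℂ)
    (hq : ∀ s ∈ Set.Icc (0:ℝ) 1, HasDerivAt q (qd s) s)
    (hGq : ∀ s ∈ Set.Icc (0:ℝ) 1,
      (fun (n : Fin N) (i : Fin d) => ∑ i' : Fin d, (E i i' : ℂ) * qd s n i')
        = Aop d h N hN Δ A nn s (starRingEnd ℂ μ) (q s))
    (hq0 : q 0 = u)
    (r rd : ℝ → Fin N → Fin d → ℂ)
    (hr : ∀ s ∈ Set.Icc (0:ℝ) 1, HasDerivAt r (rd s) s)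
    (hGr : ∀ s ∈ Set.Icc (0:ℝ) 1,
      (fun (n : Fin N) (i : Fin d) => ∑ i' : Fin d, (E i' i : ℂ) * rd s n i')
        = fun n i => -(AopT d h N hN Δ A nn s μ (r s) n i))
    (hr1 : (fun (n : Fin N) (i : Fin d) => ∑ i' : Fin d, (E i' i : ℂ) * r 1 n i') = v) :
    (∑ n : Fin N, ∑ i : Fin d,
        (starRingEnd ℂ) (q 1 n i - Bop d N hN (starRingEnd ℂ μ) u n i) * v n i) =
    (∑ n : Fin N, ∑ i : Fin d, (starRingEnd ℂ) (u n i) *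
        ((∑ i' : Fin d, (E i' i : ℂ) * r 0 n i') - BopT d N hN μ v n i)) := by
  classical
  set F : ℝ → ℂ := fun t => ∑ n : Fin N, ∑ i : Fin d,
    (starRingEnd ℂ) (q t n i) * ∑ i' : Fin d, (E i' i : ℂ) * r t n i' with hFdef
  have hq' : ∀ s ∈ Set.Icc (0:ℝ) 1, ∀ (n : Fin N) (i : Fin d),
      HasDerivAt (fun t => q t n i) (qd s n i) s := fun s hs n i =>
    (hasDerivAt_pi.1 ((hasDerivAt_pi.1 (hq s hs)) n)) i
  have hr' : ∀ s ∈ Set.Icc (0:ℝ) 1, ∀ (n : Fin N) (i : Fin d),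
      HasDerivAt (fun t => r t n i) (rd s n i) s := fun s hs n i =>
    (hasDerivAt_pi.1 ((hasDerivAt_pi.1 (hr s hs)) n)) i
  have hFd : ∀ s ∈ Set.Icc (0:ℝ) 1, HasDerivAt F
      (∑ n : Fin N, ∑ i : Fin d,
        ((starRingEnd ℂ) (qd s n i) * (∑ i' : Fin d, (E i' i : ℂ) * r s n i')
          + (starRingEnd ℂ) (q s n i) * (∑ i' : Fin d, (E i' i : ℂ) * rd s n i'))) s := by
    intro s hs
    refine HasDerivAt.fun_sum fun n _ => HasDerivAt.fun_sum fun i _ => ?_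
    have h1 : HasDerivAt (fun t => (starRingEnd ℂ) (q t n i))
        ((starRingEnd ℂ) (qd s n i)) s := by
      simpa only [Complex.star_def] using (hq' s hs n i).star
    have h2 : HasDerivAt (fun t => ∑ i' : Fin d, (E i' i : ℂ) * r t n i')
        (∑ i' : Fin d, (E i' i : ℂ) * rd s n i') s :=
      HasDerivAt.fun_sum fun i' _ => (hr' s hs n i').const_mul _
    exact h1.mul h2
  have hzero : ∀ s ∈ Set.Icc (0:ℝ) 1,
      (∑ n : Fin N, ∑ i : Fin d,
        ((starRingEnd ℂ) (qd s n i) * (∑ i' : Fin d, (E i' i : ℂ) * r s n i')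
          + (starRingEnd ℂ) (q s n i) * (∑ i' : Fin d, (E i' i : ℂ) * rd s n i'))) = 0 := by
    intro s hs
    simp only [Finset.sum_add_distrib]
    have hT1 : (∑ n : Fin N, ∑ i : Fin d,
        (starRingEnd ℂ) (qd s n i) * (∑ i' : Fin d, (E i' i : ℂ) * r s n i'))
        = ∑ n : Fin N, ∑ i : Fin d,
          (starRingEnd ℂ) (Aop d h N hN Δ A nn s (starRingEnd ℂ μ) (q s) n i) * r s n i := by
      refine Finset.sum_congr rfl fun n _ => ?_
      calc (∑ i : Fin d,
          (starRingEnd ℂ) (qd s n i) * (∑ i' : Fin d, (E i' i : ℂ) * r s n i'))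
          = ∑ i : Fin d, ∑ i' : Fin d,
            (starRingEnd ℂ) (qd s n i) * ((E i' i : ℂ) * r s n i') := by
            exact Finset.sum_congr rfl fun i _ => Finset.mul_sum _ _ _
        _ = ∑ i' : Fin d, ∑ i : Fin d,
            (starRingEnd ℂ) (qd s n i) * ((E i' i : ℂ) * r s n i') := Finset.sum_comm
        _ = ∑ i' : Fin d,
            (starRingEnd ℂ) (∑ i : Fin d, (E i' i : ℂ) * qd s n i) * r s n i' := by
            refine Finset.sum_congr rfl fun i' _ => ?_
            rw [map_sum, Finset.sum_mul]
            refine Finset.sum_congr rfl fun i _ => ?_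
            rw [map_mul, Complex.conj_ofReal]
            ring
        _ = _ := by
            refine Finset.sum_congr rfl fun i' _ => ?_
            rw [congrFun (congrFun (hGq s hs) n) i']
    have hT2 : (∑ n : Fin N, ∑ i : Fin d,
        (starRingEnd ℂ) (q s n i) * (∑ i' : Fin d, (E i' i : ℂ) * rd s n i'))
        = -∑ n : Fin N, ∑ i : Fin d,
            (starRingEnd ℂ) (q s n i) * AopT d h N hN Δ A nn s μ (r s) n i := by
      have : ∀ (n : Fin N) (i : Fin d),
          (∑ i' : Fin d, (E i' i : ℂ) * rd s n i')
            = -(AopT d h N hN Δ A nn s μ (r s) n i) :=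
        fun n i => congrFun (congrFun (hGr s hs) n) i
      simp only [this, mul_neg, Finset.sum_neg_distrib]
    rw [hT1, hT2, adjA d h N hN Δ A nn s μ (q s) (r s)]
    exact add_neg_cancel _
  have hcont : ContinuousOn F (Set.Icc 0 1) :=
    fun s hs => ((hFd s hs).continuousAt).continuousWithinAt
  have hF10 : F 1 = F 0 := by
    have := constant_of_has_deriv_right_zero hcont (fun x hx => by
      have hx' : x ∈ Set.Icc (0:ℝ) 1 := Set.Ico_subset_Icc_self hx
      exact ((hzero x hx') ▸ (hFd x hx')).hasDerivWithinAt)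
    exact this 1 (Set.right_mem_Icc.mpr zero_le_one)
  have hv : ∀ (n : Fin N) (i : Fin d),
      (∑ i' : Fin d, (E i' i : ℂ) * r 1 n i') = v n i :=
    fun n i => congrFun (congrFun hr1 n) i
  have hF1 : F 1 = ∑ n : Fin N, ∑ i : Fin d, (starRingEnd ℂ) (q 1 n i) * v n i := by
    rw [hFdef]
    exact Finset.sum_congr rfl fun n _ => Finset.sum_congr rfl fun i _ => by rw [hv n i]
  have hF0 : F 0 = ∑ n : Fin N, ∑ i : Fin d,
      (starRingEnd ℂ) (u n i) * ∑ i' : Fin d, (E i' i : ℂ) * r 0 n i' := by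
    rw [hFdef]
    simp only [hq0]
  calc (∑ n : Fin N, ∑ i : Fin d,
        (starRingEnd ℂ) (q 1 n i - Bop d N hN (starRingEnd ℂ μ) u n i) * v n i)
      = (∑ n : Fin N, ∑ i : Fin d, (starRingEnd ℂ) (q 1 n i) * v n i)
        - ∑ n : Fin N, ∑ i : Fin d,
            (starRingEnd ℂ) (Bop d N hN (starRingEnd ℂ μ) u n i) * v n i := by
        simp only [map_sub, sub_mul, Finset.sum_sub_distrib]
    _ = F 1 - ∑ n : Fin N, ∑ i : Fin d,
          (starRingEnd ℂ) (u n i) * BopT d N hN μ v n i := by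
        rw [← hF1, adjB d N hN μ u v]
    _ = F 0 - ∑ n : Fin N, ∑ i : Fin d,
          (starRingEnd ℂ) (u n i) * BopT d N hN μ v n i := by rw [hF10]
    _ = _ := by
        rw [hF0]
        simp only [mul_sub, Finset.sum_sub_distrib]
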